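/- Let G be a topological group. Then G is simply sm-factorizable if and only if for each continuous function f : G → ℝ one can find a topological group H, a continuous surjective homomorphism π : G → H onto a strongly submetrizable topological group H, and a continuous function g : H → ℝ such that f = g ∘ π. -/

import Mathlib

open Topology TopologicalSpace Pointwise Function Set

def IsCozero {X : Type*} [TopologicalSpace X] (U : Set X) : Prop :=
  ∃ f : X → ℝ, Continuous f ∧ U = f ⁻¹' {x : ℝ | x ≠ 0}

/-- A topological group is simply sm-factorizable if every cozero set is saturated with
respect to some continuous surjective homomorphism onto a separable metrizable topological group. -/
def SimplySMFactorizable (G : Type*) [Group G] [TopologicalSpace G] : Prop :=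
  ∀ U : Set G, IsCozero U →
    ∃ (H : Type) (gH : Group H) (tH : TopologicalSpace H),
      letI := gH
      letI := tH
      IsTopologicalGroup H ∧ SeparableSpace H ∧ MetrizableSpace H ∧
        ∃ π : G →* H, Continuous π ∧ Surjective π ∧ ⇑π ⁻¹' (⇑π '' U) = U

/-- A topological group is strongly submetrizable if it admits a continuous bijective
homomorphism onto a separable metrizable topological group. -/
def StronglySubmetrizable (H : Type*) [Group H] [TopologicalSpace H] : Prop :=
  ∃ (K : Type) (gK : Group K) (tK : TopologicalSpace K),
    letI := gK
    letI := tK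
    IsTopologicalGroup K ∧ SeparableSpace K ∧ MetrizableSpace K ∧
      ∃ i : H →* K, Continuous i ∧ Bijective i

lemma isCozero_preimage_Ioo {X : Type*} [TopologicalSpace X] {f : X → ℝ}
    (hf : Continuous f) (a b : ℝ) : IsCozero (f ⁻¹' Set.Ioo a b) := by
  refine ⟨fun x => max (min (f x - a) (b - f x)) 0, by fun_prop, ?_⟩
  ext x
  simp only [Set.mem_preimage, Set.mem_Ioo, Set.mem_setOf_eq]
  constructor
  · rintro ⟨h1, h2⟩
    exact (lt_max_iff.mpr (Or.inl (lt_min (by linarith) (by linarith)))).ne'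
  · intro h
    by_contra hc
    apply h
    rcases not_and_or.mp hc with h1 | h1
    · exact max_eq_right (le_trans (min_le_left _ _) (by push_neg at h1; linarith))
    · exact max_eq_right (le_trans (min_le_right _ _) (by push_neg at h1; linarith))

/-- A copy of the range of a homomorphism, to be endowed with the quotient topology. -/
def RangeCopy {G K : Type*} [Group G] [Group K] (φ : G →* K) : Type _ := φ.range

lemma factor_through_range {G : Type*} [Group G] [TopologicalSpace G] [IsTopologicalGroup G]
    {K : Type} [Group K] [TopologicalSpace K] [IsTopologicalGroup K]
    [SecondCountableTopology K] [MetrizableSpace K]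
    (φ : G →* K) (hφ : Continuous φ) (f : G → ℝ)
    (hconst : ∀ x y : G, φ x = φ y → f x = f y) (hf : Continuous f) :
    ∃ (H : Type) (gH : Group H) (tH : TopologicalSpace H),
      letI := gH
      letI := tH
      IsTopologicalGroup H ∧ StronglySubmetrizable H ∧
        ∃ π : G →* H, Continuous π ∧ Surjective π ∧
          ∃ g : H → ℝ, Continuous g ∧ f = g ∘ π := by
  classical
  let Q := G ⧸ φ.ker
  let e : Q ≃* φ.range := QuotientGroup.quotientKerEquivRange φ
  let C : Type := RangeCopy φ
  letI gC : Group C := (inferInstance : Group φ.range)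
  let E : Q ≃* C := e
  letI tC : TopologicalSpace C := TopologicalSpace.induced E.symm inferInstance
  have hind : IsInducing (⇑E.symm : C → Q) := ⟨rfl⟩
  haveI tgC : IsTopologicalGroup C := hind.topologicalGroup E.symm.toMonoidHom
  have hEsc : Continuous (⇑E.symm : C → Q) := continuous_induced_dom
  have hEc : Continuous (⇑E : Q → C) := by
    apply continuous_induced_rng.2
    have h : (⇑E.symm ∘ ⇑E : Q → Q) = id := by funext q; simp
    rw [h]; exact continuous_id
  have hmkc : Continuous (QuotientGroup.mk : G → Q) := continuous_quotient_mk'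
  let π' : G →* C := E.toMonoidHom.comp (QuotientGroup.mk' φ.ker)
  have hπ'c : Continuous ⇑π' := hEc.comp hmkc
  have hπ's : Surjective ⇑π' := E.surjective.comp (QuotientGroup.mk'_surjective φ.ker)
  let gQ : Q → ℝ := Quotient.lift f (by
    intro a b hab
    have h1 : a⁻¹ * b ∈ φ.ker := (QuotientGroup.leftRel_apply).mp hab
    have h2 : φ a = φ b := by
      have h3 := MonoidHom.mem_ker.mp h1
      rw [map_mul, map_inv] at h3
      exact (inv_mul_eq_one.mp h3)
    exact hconst a b h2)
  have hgQc : Continuous gQ := hf.quotient_lift _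
  let g : C → ℝ := gQ ∘ ⇑E.symm
  have hgc : Continuous g := hgQc.comp hEsc
  have hfeq : f = g ∘ ⇑π' := by
    funext x
    show f x = gQ (E.symm (E (QuotientGroup.mk x)))
    rw [MulEquiv.symm_apply_apply]
    rfl
  have hrr : Continuous ⇑φ.rangeRestrict := hφ.subtype_mk _
  haveI : SecondCountableTopology ↥φ.range := Topology.IsEmbedding.subtypeVal.secondCountableTopology
  haveI : MetrizableSpace ↥φ.range := Topology.IsEmbedding.subtypeVal.metrizableSpace
  haveI : SeparableSpace ↥φ.range := inferInstance
  have hsub : StronglySubmetrizable C := by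
    let i : C →* φ.range :=
      { toFun := fun x => (x : φ.range), map_one' := rfl, map_mul' := fun _ _ => rfl }
    have hquot : Continuous ((⇑i ∘ ⇑E) ∘ (QuotientGroup.mk : G → Q)) := by
      have heq : (⇑i ∘ ⇑E) ∘ (QuotientGroup.mk : G → Q) = ⇑φ.rangeRestrict := by
        funext x; rfl
      rw [heq]; exact hrr
    have h2 : Continuous (⇑i ∘ ⇑E) := (isQuotientMap_quotient_mk'.continuous_iff).mpr hquot
    have h3 : Continuous ⇑i := by
      have h4 : ⇑i = (⇑i ∘ ⇑E) ∘ ⇑E.symm := by funext x; simp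
      rw [h4]; exact h2.comp hEsc
    refine ⟨φ.range, inferInstance, inferInstance, inferInstance, inferInstance,
      inferInstance, i, h3, ⟨fun a b h => h, fun b => ⟨b, rfl⟩⟩⟩
  exact ⟨C, gC, tC, tgC, hsub, π', hπ'c, hπ's, g, hgc, hfeq⟩

/-- A topological group is simply sm-factorizable iff every continuous real-valued function
factors through a continuous surjective homomorphism onto a strongly submetrizable
topological group. -/
theorem statement0 (G : Type*) [Group G] [TopologicalSpace G] [IsTopologicalGroup G] :
    SimplySMFactorizable G ↔
      ∀ f : G → ℝ, Continuous f →
        ∃ (H : Type) (gH : Group H) (tH : TopologicalSpace H),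
          letI := gH
          letI := tH
          IsTopologicalGroup H ∧ StronglySubmetrizable H ∧
            ∃ π : G →* H, Continuous π ∧ Surjective π ∧
              ∃ g : H → ℝ, Continuous g ∧ f = g ∘ π := by
  constructor
  · intro hS f hf
    have hU : ∀ p : ℚ × ℚ, IsCozero (f ⁻¹' Set.Ioo (p.1 : ℝ) (p.2 : ℝ)) :=
      fun p => isCozero_preimage_Ioo hf _ _
    choose Hp gHp tHp htg hsep hmet πp hcont hsurj hsat using fun p => hS _ (hU p)
    letI : ∀ p, Group (Hp p) := gHp
    letI : ∀ p, TopologicalSpace (Hp p) := tHp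
    haveI : ∀ p, IsTopologicalGroup (Hp p) := htg
    haveI : ∀ p, SeparableSpace (Hp p) := hsep
    haveI : ∀ p, MetrizableSpace (Hp p) := hmet
    haveI : ∀ p, SecondCountableTopology (Hp p) := fun p => by
      letI := TopologicalSpace.metrizableSpaceMetric (Hp p)
      exact UniformSpace.secondCountable_of_separable _
    haveI : ∀ p, T3Space (Hp p) := fun p => by
      letI := TopologicalSpace.metrizableSpaceMetric (Hp p)
      infer_instance
    let φ : G →* (∀ p, Hp p) := Pi.monoidHom πp
    have hφc : Continuous ⇑φ := continuous_pi hcont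
    have hconst : ∀ x y : G, φ x = φ y → f x = f y := by
      have main : ∀ x y : G, φ x = φ y → ¬ f x < f y := by
        intro x y hxy hlt
        obtain ⟨s, hs1, hs2⟩ := exists_rat_btwn hlt
        obtain ⟨r, _, hr2⟩ := exists_rat_btwn (show f x - 1 < f x by linarith)
        have hmem : y ∈ f ⁻¹' Set.Ioo (((r, s).1 : ℚ) : ℝ) (((r, s).2 : ℚ) : ℝ) := by
          rw [← hsat (r, s)]
          exact ⟨x, ⟨hr2, hs1⟩, congrFun hxy (r, s)⟩
        exact lt_asymm hs2 hmem.2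
      intro x y h
      rcases lt_trichotomy (f x) (f y) with hl | he | hl
      · exact absurd hl (main x y h)
      · exact he
      · exact absurd hl (main y x h.symm)
    exact factor_through_range φ hφc f hconst hf
  · intro hfac U hU
    obtain ⟨f, hf, rfl⟩ := hU
    obtain ⟨H, gH, tH, htg, hsub, π, hπc, hπs, g, hgc, hfeq⟩ := hfac f hf
    obtain ⟨K, gK, tK, htgK, hsepK, hmetK, i, hic, hib⟩ := hsub
    refine ⟨K, gK, tK, htgK, hsepK, hmetK, i.comp π, hic.comp hπc,
      hib.surjective.comp hπs, ?_⟩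
    ext x
    simp only [Set.mem_preimage, Set.mem_setOf_eq]
    constructor
    · rintro ⟨y, hy, hxy⟩
      have h1 : π y = π x := hib.injective hxy
      have h2 : f x = f y := by
        rw [hfeq]
        simp only [Function.comp_apply, h1]
      rw [h2]
      exact hy
    · intro hx
      exact ⟨x, hx, rfl⟩
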